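/- Let M be a complex normed space and L : M → M a bounded linear map, and for i = 1, 2 let (N_i, α_i, E_i) be nondegenerate reversible lifts of L. Suppose there exist linear maps θ : N₁ → N₂ and φ : N₂ → N₁ satisfying θ ∘ α₁ = α₂ ∘ θ, E₂ ∘ θ = E₁, φ ∘ α₂ = α₁ ∘ φ, and E₁ ∘ φ = E₂. Then φ ∘ θ is the identity map of N₁ and θ ∘ φ is the identity map of N₂; in particular θ is a linear bijection. -/
import Mathlib

theorem intertwine_zpow_neg {N₁ N₂ : Type*} [NormedAddCommGroup N₁] [NormedSpace ℂ N₁]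
    [NormedAddCommGroup N₂] [NormedSpace ℂ N₂]
    (α₁ : N₁ ≃ₗᵢ[ℂ] N₁) (α₂ : N₂ ≃ₗᵢ[ℂ] N₂)
    (θ : N₁ →ₗ[ℂ] N₂)
    (hθα : ∀ y : N₁, θ (α₁ y) = α₂ (θ y)) :
    ∀ (n : ℕ) (y : N₁), θ ((α₁ ^ (-(n : ℤ))) y) = (α₂ ^ (-(n : ℤ))) (θ y) := by
  have hsym : ∀ y : N₁, θ (α₁.symm y) = α₂.symm (θ y) := by
    intro y
    apply α₂.injective
    rw [α₂.apply_symm_apply, ← hθα, α₁.apply_symm_apply]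
  intro n
  induction n with
  | zero => simp
  | succ k ih =>
    intro y
    have : (-(↑(k+1) : ℤ)) = (-(k:ℤ)) + (-1) := by push_cast; ring
    rw [this]
    simp only [zpow_add, zpow_neg_one, LinearIsometryEquiv.coe_mul, Function.comp_apply]
    rw [ih]
    congr 1
    exact hsym y

/-- Let `M` be a complex normed space and `L : M → M` bounded linear,
and for `i = 1, 2` let `(Nᵢ, αᵢ, Eᵢ)` be nondegenerate reversible lifts of `L`.
Suppose `θ : N₁ → N₂` and `φ : N₂ → N₁` are linear maps with `θ ∘ α₁ = α₂ ∘ θ`,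
`E₂ ∘ θ = E₁`, `φ ∘ α₂ = α₁ ∘ φ`, and `E₁ ∘ φ = E₂`.  Then `φ ∘ θ = id_{N₁}` and
`θ ∘ φ = id_{N₂}`; in particular `θ` is a linear bijection. -/
theorem stmt16 {M N₁ N₂ : Type*} [NormedAddCommGroup M] [NormedSpace ℂ M]
    [NormedAddCommGroup N₁] [NormedSpace ℂ N₁]
    [NormedAddCommGroup N₂] [NormedSpace ℂ N₂]
    (L : M →L[ℂ] M)
    (α₁ : N₁ ≃ₗᵢ[ℂ] N₁) (E₁ : N₁ →L[ℂ] M) (hE₁ : ‖E₁‖ ≤ 1)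
    (hEq₁ : ∀ y : N₁, E₁ (α₁ y) = L (E₁ y))
    (hnd₁ : ∀ y : N₁, (∀ n : ℕ, E₁ ((α₁ ^ (-(n : ℤ))) y) = 0) → y = 0)
    (α₂ : N₂ ≃ₗᵢ[ℂ] N₂) (E₂ : N₂ →L[ℂ] M) (hE₂ : ‖E₂‖ ≤ 1)
    (hEq₂ : ∀ y : N₂, E₂ (α₂ y) = L (E₂ y))
    (hnd₂ : ∀ y : N₂, (∀ n : ℕ, E₂ ((α₂ ^ (-(n : ℤ))) y) = 0) → y = 0)
    (θ : N₁ →ₗ[ℂ] N₂) (φ : N₂ →ₗ[ℂ] N₁)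
    (hθα : ∀ y : N₁, θ (α₁ y) = α₂ (θ y))
    (hθE : ∀ y : N₁, E₂ (θ y) = E₁ y)
    (hφα : ∀ y : N₂, φ (α₂ y) = α₁ (φ y))
    (hφE : ∀ y : N₂, E₁ (φ y) = E₂ y) :
    (∀ y : N₁, φ (θ y) = y) ∧ (∀ y : N₂, θ (φ y) = y) ∧ Function.Bijective θ := by
  have hθn := intertwine_zpow_neg α₁ α₂ θ hθα
  have hφn := intertwine_zpow_neg α₂ α₁ φ hφα
  have h₁ : ∀ y : N₁, φ (θ y) = y := by
    intro y
    have key : φ (θ y) - y = 0 := by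
      apply hnd₁
      intro n
      have : (α₁ ^ (-(n : ℤ))) (φ (θ y) - y)
          = φ (θ ((α₁ ^ (-(n:ℤ))) y)) - (α₁ ^ (-(n:ℤ))) y := by
        rw [map_sub, hθn, hφn]
      rw [this, map_sub, hφE, hθE, sub_self]
    exact sub_eq_zero.mp key
  have h₂ : ∀ y : N₂, θ (φ y) = y := by
    intro y
    have key : θ (φ y) - y = 0 := by
      apply hnd₂
      intro n
      have : (α₂ ^ (-(n : ℤ))) (θ (φ y) - y)
          = θ (φ ((α₂ ^ (-(n:ℤ))) y)) - (α₂ ^ (-(n:ℤ))) y := by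
        rw [map_sub, hφn, hθn]
      rw [this, map_sub, hθE, hφE, sub_self]
    exact sub_eq_zero.mp key
  refine ⟨h₁, h₂, ?_, fun y => ⟨φ y, h₂ y⟩⟩
  intro a b hab
  rw [← h₁ a, ← h₁ b, hab]
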